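/- arXiv:1411.7744 — 9 statements merged into one kernel-verified Lean document; each statement's English description precedes it below -/
import Mathlib

section
/- Every quasi-associative algebra is conservative. Precisely, if A is an associative algebra over a field of characteristic zero, λ a fixed scalar, and a new multiplication is defined by a∘b = λab + (1−λ)ba, then the algebra (A,∘) is conservative with associated multiplication F(a,b) = a∘b. -/
/-- Every quasi-associative algebra is conservative: if `A` is an associative algebra
over a field of characteristic zero and `m a b = λ • (a*b) + (1-λ) • (b*a)`, then
`(A, m)` satisfies the conservativity identity with associated multiplication
`F(a,b) = m a b`. -/
theorem quasiAssociative_isConservative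
    (K : Type*) [Field K] [CharZero K]
    (A : Type*) [Ring A] [Algebra K A]
    (lam : K) (m F : A → A → A)
    (hm : ∀ a b : A, m a b = lam • (a * b) + (1 - lam) • (b * a))
    (hF : ∀ a b : A, F a b = m a b) :
    ∀ a b x y : A,
      m b (m a (m x y) - m (m a x) y - m x (m a y))
        - m a (m (m b x) y) + m (m a (m b x)) y + m (m b x) (m a y)
        - m a (m x (m b y)) + m (m a x) (m b y) + m x (m a (m b y))
      = - m (F a b) (m x y) + m (m (F a b) x) y + m x (m (F a b) y) := by
  intro a b x y
  simp only [hF, hm, smul_add, smul_sub, mul_add, add_mul, mul_sub, sub_mul, smul_smul,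
    mul_smul_comm, smul_mul_assoc, mul_assoc]
  module
end

section
/- If P is a Poisson algebra with associative commutative product ab and Lie bracket {a,b}, then the algebra (P,*) with multiplication a*b = ab + {a,b} is a conservative algebra with associated multiplication F(a,b) = a*b. -/
/-- If `P` is a Poisson algebra with associative commutative product `a*b` and Lie
bracket `⁅a,b⁆` satisfying the Leibniz rule, then the algebra `(P, ⋆)` with
`a ⋆ b = a*b + ⁅a,b⁆` is conservative with associated multiplication `F(a,b) = a ⋆ b`. -/
theorem poisson_star_isConservative
    (K : Type*) [Field K] [CharZero K]
    (P : Type*) [CommRing P] [Algebra K P]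
    (br : P →ₗ[K] P →ₗ[K] P)
    (hanti : ∀ a b : P, br a b = - br b a)
    (hjac : ∀ a b c : P, br a (br b c) + br b (br c a) + br c (br a b) = 0)
    (hleib : ∀ a b c : P, br (a * b) c = a * br b c + br a c * b)
    (m F : P → P → P)
    (hm : ∀ a b : P, m a b = a * b + br a b)
    (hF : ∀ a b : P, F a b = m a b) :
    ∀ a b x y : P,
      m b (m a (m x y) - m (m a x) y - m x (m a y))
        - m a (m (m b x) y) + m (m a (m b x)) y + m (m b x) (m a y)
        - m a (m x (m b y)) + m (m a x) (m b y) + m x (m a (m b y))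
      = - m (F a b) (m x y) + m (m (F a b) x) y + m x (m (F a b) y) := by
  have hleib2 : ∀ c a b : P, br c (a * b) = a * br c b + br c a * b := by
    intro c a b
    rw [hanti c (a*b), hleib, hanti b c, hanti a c]; ring
  intro a b x y
  simp only [hm, hF, map_add, map_sub, LinearMap.add_apply, LinearMap.sub_apply,
    map_neg, LinearMap.neg_apply, hleib, hleib2]
  simp only [hanti b a, hanti x a, hanti x b, hanti y a, hanti y b, hanti y x,
    hanti (br a x) y, hanti (br b x) y, hanti (br a (br b x)) y,
    hanti (br b x) (br a y), hanti (br a b) x, hanti (br x (br a b)) y,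
    hanti (br b x) a, hanti (br a x) b, hanti (br b y) a, hanti (br a b) y, hanti (br b y) (br a x),
    map_neg, LinearMap.neg_apply, neg_neg, mul_neg, neg_mul]
  have hb : br b (br a (br x y)) + br b (br x (br y a)) + br b (br y (br a x)) = 0 := by
    simpa only [map_add, map_zero] using congrArg (⇑(br b)) (hjac a x y)
  have hJ1 := hjac a x (br b y)
  have hJ2 := hjac a y (br b x)
  have hJ3 := hjac x y (br a b)
  simp only [hanti b a, hanti x a, hanti x b, hanti y a, hanti y b, hanti y x,
    hanti (br b y) a, hanti (br b x) a, hanti (br a b) y, hanti (br a b) x,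
    hanti (br b y) (br a x), hanti (br b x) (br a y),
    map_neg, LinearMap.neg_apply, neg_neg, mul_neg, neg_mul] at hb hJ1 hJ2 hJ3
  linear_combination -hJ1 + hJ2 + hJ3 + hb
end

section
/- In every conservative left-commutative algebra, the identity (a(bx))y = (F(a,b)x)y holds for all elements a,b,x,y, where F is the associated multiplication. -/
/-- In every conservative left-commutative algebra, `(a(bx))y = (F(a,b)x)y`. -/
theorem conservative_leftCommutative_identity
    (K : Type*) [Field K] [CharZero K]
    (A : Type*) [AddCommGroup A] [Module K A]
    (m F : A →ₗ[K] A →ₗ[K] A)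
    (hlc : ∀ a b x : A, m a (m b x) = m b (m a x))
    (hcons : ∀ a b x y : A,
      m b (m a (m x y) - m (m a x) y - m x (m a y))
        - m a (m (m b x) y) + m (m a (m b x)) y + m (m b x) (m a y)
        - m a (m x (m b y)) + m (m a x) (m b y) + m x (m a (m b y))
      = - m (F a b) (m x y) + m (m (F a b) x) y + m x (m (F a b) y)) :
    ∀ a b x y : A, m (m a (m b x)) y = m (m (F a b) x) y := by
  intro a b x y
  have h := hcons a b x y
  simp only [map_sub] at h
  have hb : m b (m a (m x y)) = m b (m x (m a y)) := by rw [hlc a x y]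
  linear_combination (norm := abel) h - hb + hlc a (m b x) y + hlc a x (m b y)
    - hlc (m a x) b y - hlc (F a b) x y
end

section
/- The simple left-commutative algebra A with basis {e_1,…,e_n} (n ≥ 2) and multiplication e_i·e_j = j·e_j is not conservative: there is no bilinear multiplication F on A satisfying the conservativity identity. In particular, the required relations e_1(e_1e_1) = F(e_1,e_1)e_1 and e_1(e_1e_2) = F(e_1,e_1)e_2 force the sum of coefficients of F(e_1,e_1) to be simultaneously 1 and 2. -/
/-- The simple left-commutative algebra with basis `e_1, …, e_n` (`n ≥ 2`) and
multiplication `e_i · e_j = j • e_j` is not conservative: no bilinear `F`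
satisfies the conservativity identity.  (Here indices `j : Fin n` correspond to
`j+1 ∈ {1,…,n}`, so `m u v = (∑ i, u i) • (fun j => (j+1) * v j)`.) -/
theorem simple_leftCommutative_not_conservative
    (K : Type*) [Field K] [CharZero K]
    (n : ℕ) (hn : 2 ≤ n)
    (m : (Fin n → K) → (Fin n → K) → (Fin n → K))
    (hm : ∀ u v : Fin n → K, ∀ j : Fin n,
      m u v j = (∑ i : Fin n, u i) * (((j : ℕ) + 1 : K) * v j)) :
    ¬ ∃ F : (Fin n → K) →ₗ[K] (Fin n → K) →ₗ[K] (Fin n → K),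
      ∀ a b x y : Fin n → K,
        m b (m a (m x y) - m (m a x) y - m x (m a y))
          - m a (m (m b x) y) + m (m a (m b x)) y + m (m b x) (m a y)
          - m a (m x (m b y)) + m (m a x) (m b y) + m x (m a (m b y))
        = - m (F a b) (m x y) + m (m (F a b) x) y + m x (m (F a b) y) := by
  rintro ⟨F, hF⟩
  have h0 : 0 < n := by omega
  have h1 : 1 < n := by omega
  set i0 : Fin n := ⟨0, h0⟩ with hi0
  set i1 : Fin n := ⟨1, h1⟩ with hi1
  set e0 : Fin n → K := Pi.single i0 1 with he0
  set e1 : Fin n → K := Pi.single i1 1 with he1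
  have hne : i0 ≠ i1 := by simp [hi0, hi1, Fin.ext_iff]
  have E0 := congrFun (hF e0 e0 e0 e0) i0
  have E1 := congrFun (hF e0 e0 e1 e0) i0
  simp only [Pi.add_apply, Pi.sub_apply, Pi.neg_apply, hm, he0, he1,
    Pi.single_apply, mul_ite, mul_one, mul_zero, Finset.sum_ite_eq',
    Finset.mem_univ, if_true, Finset.mul_sum, Finset.sum_mul] at E0 E1
  norm_num at E0 E1
  rw [← Finset.sum_mul, ← E0] at E1
  norm_num at E1
end

section
/- The space of Jacobi elements of the algebra W(2) (i.e., elements a such that L_a is a derivation of W(2)) is the 6-dimensional subspace spanned by α_{12}^1, α_{21}^1, α_{22}^1, α_{12}^2, α_{21}^2, α_{22}^2; equivalently it is spanned by all α_{ij}^k with i + j > 2. -/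
section

variable (K : Type*) [Field K] [CharZero K]

/-- The 2-dimensional space `E₂`. -/
abbrev V2 := Fin 2 → K

/-- The basis `e 0, e 1` of `E₂`. -/
noncomputable def e (i : Fin 2) : V2 K := Pi.single i 1

/-- `W(2)`: the space of all bilinear maps on `E₂`. -/
abbrev W := V2 K →ₗ[K] V2 K →ₗ[K] V2 K

/-- The basis elements `α_{ij}^k` of `W(2)`, `alpha i j k (e t) (e l) = δ_{it} δ_{jl} • e k`
(indices shifted to `0,1`). -/
noncomputable def alpha (i j k : Fin 2) : W K :=
  LinearMap.mk₂ K (fun x y => (x i * y j) • e K k)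
    (fun x x' y => by simp [add_mul, add_smul])
    (fun c x y => by simp [smul_smul, mul_assoc])
    (fun x y y' => by simp [mul_add, add_smul])
    (fun c x y => by simp [smul_smul]; ring_nf)

/-- The multiplication of the conservative algebra `W(2)`:
`(A·B)(x,y) = A(e₁, B(x,y)) − B(A(e₁,x), y) − B(x, A(e₁,y))`. -/
noncomputable def mulW (A B : W K) : W K :=
  LinearMap.mk₂ K
    (fun x y => A (e K 0) (B x y) - B (A (e K 0) x) y - B x (A (e K 0) y))
    (fun x x' y => by simp only [map_add, LinearMap.add_apply]; abel)
    (fun c x y => by simp only [map_smul, LinearMap.smul_apply, smul_sub])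
    (fun x y y' => by simp only [map_add, LinearMap.add_apply]; abel)
    (fun c x y => by simp only [map_smul, LinearMap.smul_apply, smul_sub])

end

section

variable (K : Type*) [Field K] [CharZero K]


set_option linter.unusedSectionVars false in
/-- Extensionality for bilinear maps on `E₂`: equality on the basis suffices. -/
lemma W_ext {A B : W K} (h : ∀ i j : Fin 2, A (e K i) (e K j) = B (e K i) (e K j)) : A = B := by
  apply (Pi.basisFun K (Fin 2)).ext; intro i
  apply (Pi.basisFun K (Fin 2)).ext; intro j
  simpa [e, Pi.basisFun_apply] using h i j

set_option linter.unusedSectionVars false in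
/-- If `a(e₀, e₀) = 0` then `a` is a Jacobi element. -/
lemma jacobi_of_zero {a : W K} (h0 : a (e K 0) (e K 0) = 0) (A B : W K) :
    mulW K a (mulW K A B) = mulW K (mulW K a A) B + mulW K A (mulW K a B) := by
  apply LinearMap.ext; intro x; apply LinearMap.ext; intro y
  simp only [mulW, LinearMap.mk₂_apply, LinearMap.add_apply, map_sub, LinearMap.sub_apply, h0,
    map_zero, LinearMap.zero_apply, sub_zero, zero_sub]
  abel

/-- Evaluation of a bilinear map at `(e₀, e₀)`, as a linear map. -/
noncomputable def ev00 : W K →ₗ[K] V2 K where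
  toFun a := a (e K 0) (e K 0)
  map_add' _ _ := rfl
  map_smul' _ _ := rfl

/-- Membership in the span of the six `α`'s is equivalent to vanishing at `(e₀, e₀)`. -/
lemma mem_span_iff {a : W K} :
    a ∈ Submodule.span K {alpha K 0 1 0, alpha K 1 0 0, alpha K 1 1 0,
      alpha K 0 1 1, alpha K 1 0 1, alpha K 1 1 1} ↔ a (e K 0) (e K 0) = 0 := by
  constructor
  · intro ha
    have hle : Submodule.span K {alpha K 0 1 0, alpha K 1 0 0, alpha K 1 1 0,
        alpha K 0 1 1, alpha K 1 0 1, alpha K 1 1 1} ≤ LinearMap.ker (ev00 K) := by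
      rw [Submodule.span_le]
      intro x hx
      simp only [Set.mem_insert_iff, Set.mem_singleton_iff] at hx
      rcases hx with rfl|rfl|rfl|rfl|rfl|rfl <;>
        simp [ev00, alpha, e, LinearMap.mem_ker, Pi.single_apply]
    exact hle ha
  · intro h0
    have key : a = a (e K 0) (e K 1) 0 • alpha K 0 1 0 + a (e K 0) (e K 1) 1 • alpha K 0 1 1
        + a (e K 1) (e K 0) 0 • alpha K 1 0 0 + a (e K 1) (e K 0) 1 • alpha K 1 0 1
        + a (e K 1) (e K 1) 0 • alpha K 1 1 0 + a (e K 1) (e K 1) 1 • alpha K 1 1 1 := by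
      apply W_ext; intro i j
      funext k
      have h0k := congrFun h0 k
      fin_cases i <;> fin_cases j <;> fin_cases k <;> simp_all [alpha, e, Pi.single_apply]
    rw [key]
    have mem : ∀ x ∈ ({alpha K 0 1 0, alpha K 1 0 0, alpha K 1 1 0,
        alpha K 0 1 1, alpha K 1 0 1, alpha K 1 1 1} : Set (W K)),
        x ∈ Submodule.span K {alpha K 0 1 0, alpha K 1 0 0, alpha K 1 1 0,
          alpha K 0 1 1, alpha K 1 0 1, alpha K 1 1 1} := fun x hx => Submodule.subset_span hx
    refine add_mem (add_mem (add_mem (add_mem (add_mem ?_ ?_) ?_) ?_) ?_) ?_ <;>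
      exact Submodule.smul_mem _ _ (mem _ (by simp))

/-- The space of Jacobi elements of `W(2)` (elements `a` such that left
multiplication by `a` is a derivation) is the span of
`α₁₂¹, α₂₁¹, α₂₂¹, α₁₂², α₂₁², α₂₂²` (all `α_{ij}^k` with `i+j>2`). -/
theorem jacobiElements_W2 :
    {a : W K | ∀ A B : W K, mulW K a (mulW K A B)
        = mulW K (mulW K a A) B + mulW K A (mulW K a B)}
      = ↑(Submodule.span K {alpha K 0 1 0, alpha K 1 0 0, alpha K 1 1 0,
          alpha K 0 1 1, alpha K 1 0 1, alpha K 1 1 1}) := by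
  ext a
  simp only [Set.mem_setOf_eq, SetLike.mem_coe, mem_span_iff]
  constructor
  · intro h
    have h1 := congrFun (LinearMap.congr_fun (LinearMap.congr_fun
      (h (alpha K 0 0 1) (alpha K 0 0 0)) (e K 0)) (e K 0)) 1
    have h2 := congrFun (LinearMap.congr_fun (LinearMap.congr_fun
      (h (alpha K 1 0 1) (alpha K 0 0 0)) (e K 0)) (e K 0)) 1
    simp only [mulW, alpha, LinearMap.mk₂_apply, map_sub, map_smul, LinearMap.sub_apply,
      LinearMap.smul_apply, LinearMap.add_apply, Pi.sub_apply, Pi.add_apply, Pi.smul_apply,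
      smul_eq_mul, e, Pi.single_apply] at h1 h2
    simp at h1 h2
    funext k
    fin_cases k
    · simpa [e] using h1
    · simpa [e] using h2
  · exact fun h0 => jacobi_of_zero K h0

end
end

section
/- The element −α_{11}^1 is a left quasiunit of the algebra W(2): (−α_{11}^1)(AB) = ((−α_{11}^1)A)B + A((−α_{11}^1)B) − AB for all A,B ∈ W(2). Moreover, −α_{11}^1 is not a left unit of W(2). -/
section

variable (K : Type*) [Field K] [CharZero K]

omit [CharZero K] in
lemma hAe (v : V2 K) : (alpha K 0 0 0) (e K 0) v = v 0 • e K 0 := by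
  simp [alpha, LinearMap.mk₂_apply, e]

omit [CharZero K] in
lemma he0 : (e K 0) 0 = 1 := by simp [e]

/-- `-α₁₁¹` is a left quasiunit of `W(2)` but not a left unit. -/
theorem negAlpha111_leftQuasiunit :
    (∀ A B : W K, mulW K (-(alpha K 0 0 0)) (mulW K A B)
        = mulW K (mulW K (-(alpha K 0 0 0)) A) B
          + mulW K A (mulW K (-(alpha K 0 0 0)) B) - mulW K A B) ∧
    ¬ (∀ A : W K, mulW K (-(alpha K 0 0 0)) A = A) := by
  constructor
  · intro A B
    apply LinearMap.ext; intro x; apply LinearMap.ext; intro y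
    simp only [mulW, LinearMap.mk₂_apply, LinearMap.add_apply, LinearMap.sub_apply,
      map_neg, map_smul, map_sub, LinearMap.neg_apply, LinearMap.smul_apply, hAe, he0, one_smul,
      Pi.neg_apply, Pi.smul_apply, smul_eq_mul, Pi.sub_apply, mul_one]
    module
  · intro h
    have h2 := congrFun (LinearMap.congr_fun (LinearMap.congr_fun
      (h (alpha K 1 0 0)) (e K 1)) (e K 0)) 0
    simp [mulW, alpha, e, LinearMap.mk₂_apply, Pi.single_apply] at h2

end
end

section
/- The algebra W(2) has exactly one subalgebra of codimension 1, namely the subspace spanned by e_1=α_{11}^1, e_2=α_{12}^1, e_3=α_{21}^1, e_4=α_{22}^1, e_6=α_{12}^2, e_7=α_{21}^2, e_8=α_{22}^2 (i.e., the span of all basis elements except e_5=α_{11}^2). -/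
set_option maxSynthPendingDepth 3
set_option synthInstance.maxHeartbeats 1000000
set_option maxHeartbeats 1000000

section Aux

set_option linter.unusedSectionVars false

variable (K : Type*) [Field K] [CharZero K]

lemma mulW_apply (A B : W K) (x y : V2 K) :
    mulW K A B x y = A (e K 0) (B x y) - B (A (e K 0) x) y - B x (A (e K 0) y) := rfl

lemma mulW_zero_left (B : W K) : mulW K 0 B = 0 := by
  apply LinearMap.ext; intro x; apply LinearMap.ext; intro y
  simp [mulW_apply]

lemma mulW_zero_right (A : W K) : mulW K A 0 = 0 := by
  apply LinearMap.ext; intro x; apply LinearMap.ext; intro y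
  simp [mulW_apply]

lemma mulW_add_left (A A' B : W K) : mulW K (A + A') B = mulW K A B + mulW K A' B := by
  apply LinearMap.ext; intro x; apply LinearMap.ext; intro y
  simp [mulW_apply]; abel

lemma mulW_add_right (A B B' : W K) : mulW K A (B + B') = mulW K A B + mulW K A B' := by
  apply LinearMap.ext; intro x; apply LinearMap.ext; intro y
  simp [mulW_apply]; abel

lemma mulW_smul_left (a : K) (A B : W K) : mulW K (a • A) B = a • mulW K A B := by
  apply LinearMap.ext; intro x; apply LinearMap.ext; intro y
  simp [mulW_apply, smul_sub]

lemma mulW_smul_right (a : K) (A B : W K) : mulW K A (a • B) = a • mulW K A B := by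
  apply LinearMap.ext; intro x; apply LinearMap.ext; intro y
  simp [mulW_apply, smul_sub]

lemma mulW_sub_left (A A' B : W K) : mulW K (A - A') B = mulW K A B - mulW K A' B := by
  apply LinearMap.ext; intro x; apply LinearMap.ext; intro y
  simp [mulW_apply]; abel

lemma mulW_sub_right (A B B' : W K) : mulW K A (B - B') = mulW K A B - mulW K A B' := by
  apply LinearMap.ext; intro x; apply LinearMap.ext; intro y
  simp [mulW_apply]; abel

lemma mulW_left_one (j k : Fin 2) (B : W K) : mulW K (alpha K 1 j k) B = 0 := by
  apply LinearMap.ext; intro x; apply LinearMap.ext; intro y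
  simp [mulW_apply, alpha, e, Pi.single_apply]

lemma fmul_expand (f : W K →ₗ[K] K) (a b c d : K) (u v w z : W K) :
    f (mulW K (a • u - b • v) (c • w - d • z)) =
      a * c * f (mulW K u w) - a * d * f (mulW K u z)
        - b * c * f (mulW K v w) + b * d * f (mulW K v z) := by
  simp only [mulW_sub_left, mulW_smul_left, mulW_sub_right, mulW_smul_right,
    map_sub, map_smul, smul_eq_mul]
  ring

lemma fmul_expand1 (f : W K →ₗ[K] K) (a b : K) (u v w : W K) :
    f (mulW K (a • u - b • v) w) = a * f (mulW K u w) - b * f (mulW K v w) := by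
  simp only [mulW_sub_left, mulW_smul_left, map_sub, map_smul, smul_eq_mul]

lemma p00 : mulW K (alpha K 0 0 0) (alpha K 0 0 0) = -(alpha K 0 0 0) := by
  apply LinearMap.ext; intro x; apply LinearMap.ext; intro y; funext t
  fin_cases t <;> simp [mulW_apply, alpha, e, Pi.single_apply] <;> ring_nf

lemma p01 : mulW K (alpha K 0 0 0) (alpha K 0 1 0) = (0 : W K) := by
  apply LinearMap.ext; intro x; apply LinearMap.ext; intro y; funext t
  fin_cases t <;> simp [mulW_apply, alpha, e, Pi.single_apply] <;> ring_nf

lemma p02 : mulW K (alpha K 0 0 0) (alpha K 1 0 0) = (0 : W K) := by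
  apply LinearMap.ext; intro x; apply LinearMap.ext; intro y; funext t
  fin_cases t <;> simp [mulW_apply, alpha, e, Pi.single_apply] <;> ring_nf

lemma p03 : mulW K (alpha K 0 0 0) (alpha K 1 1 0) = alpha K 1 1 0 := by
  apply LinearMap.ext; intro x; apply LinearMap.ext; intro y; funext t
  fin_cases t <;> simp [mulW_apply, alpha, e, Pi.single_apply] <;> ring_nf

lemma p04 : mulW K (alpha K 0 0 0) (alpha K 0 0 1) = ((-2 : K) • alpha K 0 0 1) := by
  apply LinearMap.ext; intro x; apply LinearMap.ext; intro y; funext t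
  fin_cases t <;> simp [mulW_apply, alpha, e, Pi.single_apply] <;> ring_nf

lemma p05 : mulW K (alpha K 0 0 0) (alpha K 0 1 1) = -(alpha K 0 1 1) := by
  apply LinearMap.ext; intro x; apply LinearMap.ext; intro y; funext t
  fin_cases t <;> simp [mulW_apply, alpha, e, Pi.single_apply] <;> ring_nf

lemma p06 : mulW K (alpha K 0 0 0) (alpha K 1 0 1) = -(alpha K 1 0 1) := by
  apply LinearMap.ext; intro x; apply LinearMap.ext; intro y; funext t
  fin_cases t <;> simp [mulW_apply, alpha, e, Pi.single_apply] <;> ring_nf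

lemma p07 : mulW K (alpha K 0 0 0) (alpha K 1 1 1) = (0 : W K) := by
  apply LinearMap.ext; intro x; apply LinearMap.ext; intro y; funext t
  fin_cases t <;> simp [mulW_apply, alpha, e, Pi.single_apply] <;> ring_nf

lemma p10 : mulW K (alpha K 0 1 0) (alpha K 0 0 0) = -(alpha K 0 1 0) - alpha K 1 0 0 := by
  apply LinearMap.ext; intro x; apply LinearMap.ext; intro y; funext t
  fin_cases t <;> simp [mulW_apply, alpha, e, Pi.single_apply] <;> ring_nf

lemma p11 : mulW K (alpha K 0 1 0) (alpha K 0 1 0) = -(alpha K 1 1 0) := by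
  apply LinearMap.ext; intro x; apply LinearMap.ext; intro y; funext t
  fin_cases t <;> simp [mulW_apply, alpha, e, Pi.single_apply] <;> ring_nf

lemma p12 : mulW K (alpha K 0 1 0) (alpha K 1 0 0) = -(alpha K 1 1 0) := by
  apply LinearMap.ext; intro x; apply LinearMap.ext; intro y; funext t
  fin_cases t <;> simp [mulW_apply, alpha, e, Pi.single_apply] <;> ring_nf

lemma p13 : mulW K (alpha K 0 1 0) (alpha K 1 1 0) = (0 : W K) := by
  apply LinearMap.ext; intro x; apply LinearMap.ext; intro y; funext t
  fin_cases t <;> simp [mulW_apply, alpha, e, Pi.single_apply] <;> ring_nf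

lemma p14 : mulW K (alpha K 0 1 0) (alpha K 0 0 1) = alpha K 0 0 0 - alpha K 0 1 1 - alpha K 1 0 1 := by
  apply LinearMap.ext; intro x; apply LinearMap.ext; intro y; funext t
  fin_cases t <;> simp [mulW_apply, alpha, e, Pi.single_apply] <;> ring_nf

lemma p15 : mulW K (alpha K 0 1 0) (alpha K 0 1 1) = alpha K 0 1 0 - alpha K 1 1 1 := by
  apply LinearMap.ext; intro x; apply LinearMap.ext; intro y; funext t
  fin_cases t <;> simp [mulW_apply, alpha, e, Pi.single_apply] <;> ring_nf

lemma p16 : mulW K (alpha K 0 1 0) (alpha K 1 0 1) = alpha K 1 0 0 - alpha K 1 1 1 := by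
  apply LinearMap.ext; intro x; apply LinearMap.ext; intro y; funext t
  fin_cases t <;> simp [mulW_apply, alpha, e, Pi.single_apply] <;> ring_nf

lemma p17 : mulW K (alpha K 0 1 0) (alpha K 1 1 1) = alpha K 1 1 0 := by
  apply LinearMap.ext; intro x; apply LinearMap.ext; intro y; funext t
  fin_cases t <;> simp [mulW_apply, alpha, e, Pi.single_apply] <;> ring_nf

lemma p41 : mulW K (alpha K 0 0 1) (alpha K 0 1 0) = -(alpha K 0 0 0) + alpha K 0 1 1 := by
  apply LinearMap.ext; intro x; apply LinearMap.ext; intro y; funext t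
  fin_cases t <;> simp [mulW_apply, alpha, e, Pi.single_apply] <;> ring_nf

lemma p42 : mulW K (alpha K 0 0 1) (alpha K 1 0 0) = -(alpha K 0 0 0) + alpha K 1 0 1 := by
  apply LinearMap.ext; intro x; apply LinearMap.ext; intro y; funext t
  fin_cases t <;> simp [mulW_apply, alpha, e, Pi.single_apply] <;> ring_nf

lemma p43 : mulW K (alpha K 0 0 1) (alpha K 1 1 0) = -(alpha K 0 1 0) - alpha K 1 0 0 + alpha K 1 1 1 := by
  apply LinearMap.ext; intro x; apply LinearMap.ext; intro y; funext t
  fin_cases t <;> simp [mulW_apply, alpha, e, Pi.single_apply] <;> ring_nf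

lemma p46 : mulW K (alpha K 0 0 1) (alpha K 1 0 1) = -(alpha K 0 0 1) := by
  apply LinearMap.ext; intro x; apply LinearMap.ext; intro y; funext t
  fin_cases t <;> simp [mulW_apply, alpha, e, Pi.single_apply] <;> ring_nf

lemma p47 : mulW K (alpha K 0 0 1) (alpha K 1 1 1) = -(alpha K 0 1 1) - alpha K 1 0 1 := by
  apply LinearMap.ext; intro x; apply LinearMap.ext; intro y; funext t
  fin_cases t <;> simp [mulW_apply, alpha, e, Pi.single_apply] <;> ring_nf

lemma p50 : mulW K (alpha K 0 1 1) (alpha K 0 0 0) = (0 : W K) := by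
  apply LinearMap.ext; intro x; apply LinearMap.ext; intro y; funext t
  fin_cases t <;> simp [mulW_apply, alpha, e, Pi.single_apply] <;> ring_nf

lemma p51 : mulW K (alpha K 0 1 1) (alpha K 0 1 0) = -(alpha K 0 1 0) := by
  apply LinearMap.ext; intro x; apply LinearMap.ext; intro y; funext t
  fin_cases t <;> simp [mulW_apply, alpha, e, Pi.single_apply] <;> ring_nf

lemma p52 : mulW K (alpha K 0 1 1) (alpha K 1 0 0) = -(alpha K 1 0 0) := by
  apply LinearMap.ext; intro x; apply LinearMap.ext; intro y; funext t
  fin_cases t <;> simp [mulW_apply, alpha, e, Pi.single_apply] <;> ring_nf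

lemma p53 : mulW K (alpha K 0 1 1) (alpha K 1 1 0) = ((-2 : K) • alpha K 1 1 0) := by
  apply LinearMap.ext; intro x; apply LinearMap.ext; intro y; funext t
  fin_cases t <;> simp [mulW_apply, alpha, e, Pi.single_apply] <;> ring_nf

lemma p54 : mulW K (alpha K 0 1 1) (alpha K 0 0 1) = alpha K 0 0 1 := by
  apply LinearMap.ext; intro x; apply LinearMap.ext; intro y; funext t
  fin_cases t <;> simp [mulW_apply, alpha, e, Pi.single_apply] <;> ring_nf

lemma p55 : mulW K (alpha K 0 1 1) (alpha K 0 1 1) = (0 : W K) := by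
  apply LinearMap.ext; intro x; apply LinearMap.ext; intro y; funext t
  fin_cases t <;> simp [mulW_apply, alpha, e, Pi.single_apply] <;> ring_nf

lemma p56 : mulW K (alpha K 0 1 1) (alpha K 1 0 1) = (0 : W K) := by
  apply LinearMap.ext; intro x; apply LinearMap.ext; intro y; funext t
  fin_cases t <;> simp [mulW_apply, alpha, e, Pi.single_apply] <;> ring_nf

lemma p57 : mulW K (alpha K 0 1 1) (alpha K 1 1 1) = -(alpha K 1 1 1) := by
  apply LinearMap.ext; intro x; apply LinearMap.ext; intro y; funext t
  fin_cases t <;> simp [mulW_apply, alpha, e, Pi.single_apply] <;> ring_nf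


noncomputable def v7 : Fin 7 → W K :=
  ![alpha K 0 0 0, alpha K 0 1 0, alpha K 1 0 0, alpha K 1 1 0,
    alpha K 0 1 1, alpha K 1 0 1, alpha K 1 1 1]

lemma v7_0 : v7 K 0 = alpha K 0 0 0 := rfl
lemma v7_1 : v7 K 1 = alpha K 0 1 0 := rfl
lemma v7_2 : v7 K 2 = alpha K 1 0 0 := rfl
lemma v7_3 : v7 K 3 = alpha K 1 1 0 := rfl
lemma v7_4 : v7 K 4 = alpha K 0 1 1 := rfl
lemma v7_5 : v7 K 5 = alpha K 1 0 1 := rfl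
lemma v7_6 : v7 K 6 = alpha K 1 1 1 := rfl

lemma indep7 : LinearIndependent K (v7 K) := by
  rw [Fintype.linearIndependent_iff]
  intro g hg
  have ev : ∀ (p q : Fin 2) (r : Fin 2),
      (∑ i : Fin 7, g i • v7 K i) (e K p) (e K q) r = 0 := by
    intro p q r; rw [hg]; simp
  have h0 := ev 0 0 0
  have h1 := ev 0 1 0
  have h2 := ev 1 0 0
  have h3 := ev 1 1 0
  have h4 := ev 0 1 1
  have h5 := ev 1 0 1
  have h6 := ev 1 1 1
  simp [Fin.sum_univ_seven, v7_0, v7_1, v7_2, v7_3, v7_4, v7_5, v7_6,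
    alpha, e, Pi.single_apply] at h0 h1 h2 h3 h4 h5 h6
  intro i; fin_cases i <;> simp_all

lemma finrank_W : Module.finrank K (W K) = 8 := by
  rw [Module.finrank_linearMap, Module.finrank_linearMap, Module.finrank_fin_fun]

lemma range_v7 : Set.range (v7 K) =
    ({alpha K 0 0 0, alpha K 0 1 0, alpha K 1 0 0,
      alpha K 1 1 0, alpha K 0 1 1, alpha K 1 0 1, alpha K 1 1 1} : Set (W K)) := by
  unfold v7
  simp only [Matrix.range_cons, Matrix.range_cons_empty, Set.singleton_union,
    Matrix.range_empty, insert_empty_eq]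

lemma finrank_span7 :
    Module.finrank K (Submodule.span K {alpha K 0 0 0, alpha K 0 1 0, alpha K 1 0 0,
        alpha K 1 1 0, alpha K 0 1 1, alpha K 1 0 1, alpha K 1 1 1}) = 7 := by
  rw [← range_v7, finrank_span_eq_card (indep7 K)]
  simp

end Aux


section

variable (K : Type*) [Field K] [CharZero K]

/-- `W(2)` has exactly one subalgebra of codimension 1, namely the span of all
basis elements `α_{ij}^k` except `e₅ = α₁₁²`. -/
theorem subalgebras_codim_one_W2 :
    {B : Submodule K (W K) |
        (∀ x ∈ B, ∀ y ∈ B, mulW K x y ∈ B) ∧ Module.finrank K B = 7}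
      = {Submodule.span K {alpha K 0 0 0, alpha K 0 1 0, alpha K 1 0 0,
          alpha K 1 1 0, alpha K 0 1 1, alpha K 1 0 1, alpha K 1 1 1}} := by
  ext B
  simp only [Set.mem_setOf_eq, Set.mem_singleton_iff]
  constructor
  · rintro ⟨hmul, hrank⟩
    have hBlt : B < ⊤ := by
      rw [lt_top_iff_ne_top]
      intro h
      rw [h, finrank_top, finrank_W] at hrank
      exact absurd hrank (by norm_num)
    obtain ⟨f, hf0, hfmap⟩ := B.exists_dual_map_eq_bot_of_lt_top hBlt inferInstance
    have hBle : B ≤ LinearMap.ker f := by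
      intro x hx
      rw [LinearMap.mem_ker]
      have hmem : f x ∈ B.map f := Submodule.mem_map_of_mem hx
      rw [hfmap] at hmem
      simpa using hmem
    have hrange : Module.finrank K (LinearMap.range f) = 1 := by
      have hle : Module.finrank K (LinearMap.range f) ≤ 1 := by
        simpa using (LinearMap.range f).finrank_le
      have hne : LinearMap.range f ≠ ⊥ := by
        simpa [LinearMap.range_eq_bot] using hf0
      have hpos : Module.finrank K (LinearMap.range f) ≠ 0 := by
        intro h
        exact hne (Submodule.finrank_eq_zero.mp h)
      omega
    have hker7 : Module.finrank K (LinearMap.ker f) = 7 := by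
      have hrk := LinearMap.finrank_range_add_finrank_ker f
      rw [finrank_W, hrange] at hrk
      omega
    have hBeq : B = LinearMap.ker f :=
      Submodule.eq_of_le_of_finrank_eq hBle (by rw [hrank, hker7])
    have H : ∀ x y : W K, f x = 0 → f y = 0 → f (mulW K x y) = 0 := by
      intro x y hx hy
      have hxB : x ∈ B := by rw [hBeq, LinearMap.mem_ker]; exact hx
      have hyB : y ∈ B := by rw [hBeq, LinearMap.mem_ker]; exact hy
      have := hmul x hxB y hyB
      rw [hBeq, LinearMap.mem_ker] at this
      exact this
    have hx13 : f ((f (alpha K 1 1 0)) • (alpha K 0 1 0) - (f (alpha K 0 1 0)) • (alpha K 1 1 0)) = 0 := by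
      simp only [map_sub, map_smul, smul_eq_mul]; ring
    have E1 := H _ _ hx13 hx13
    rw [fmul_expand] at E1
    simp only [p11 K, p13 K, mulW_left_one, map_zero, map_sub, map_neg, map_add, map_smul, smul_eq_mul] at E1
    have h3 : f (alpha K 1 1 0) = 0 := by
      have h : (f (alpha K 1 1 0)) ^ 3 = 0 := by linear_combination -E1
      exact pow_eq_zero_iff (by norm_num) |>.mp h
    have hx17 : f ((f (alpha K 1 1 1)) • (alpha K 0 1 0) - (f (alpha K 0 1 0)) • (alpha K 1 1 1)) = 0 := by
      simp only [map_sub, map_smul, smul_eq_mul]; ring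
    have hx07 : f ((f (alpha K 1 1 1)) • (alpha K 0 0 0) - (f (alpha K 0 0 0)) • (alpha K 1 1 1)) = 0 := by
      simp only [map_sub, map_smul, smul_eq_mul]; ring
    have E2a := H _ _ hx17 hx07
    rw [fmul_expand] at E2a
    simp only [p10 K, p17 K, mulW_left_one, map_zero, map_sub, map_neg, map_add, map_smul, smul_eq_mul] at E2a
    have hx47 : f ((f (alpha K 1 1 1)) • (alpha K 0 0 1) - (f (alpha K 0 0 1)) • (alpha K 1 1 1)) = 0 := by
      simp only [map_sub, map_smul, smul_eq_mul]; ring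
    have hx37 : f ((f (alpha K 1 1 1)) • (alpha K 1 1 0) - (f (alpha K 1 1 0)) • (alpha K 1 1 1)) = 0 := by
      simp only [map_sub, map_smul, smul_eq_mul]; ring
    have E2b := H _ _ hx47 hx37
    rw [fmul_expand] at E2b
    simp only [p43 K, p47 K, mulW_left_one, map_zero, map_sub, map_neg, map_add, map_smul, smul_eq_mul] at E2b
    have h7 : f (alpha K 1 1 1) = 0 := by
      have h : (f (alpha K 1 1 1)) ^ 3 = 0 := by
        linear_combination E2b - E2a - (f (alpha K 0 1 1) + f (alpha K 1 0 1) + f (alpha K 0 0 0)) * (f (alpha K 1 1 1)) * h3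
      exact pow_eq_zero_iff (by norm_num) |>.mp h
    have hx12 : f ((f (alpha K 1 0 0)) • (alpha K 0 1 0) - (f (alpha K 0 1 0)) • (alpha K 1 0 0)) = 0 := by
      simp only [map_sub, map_smul, smul_eq_mul]; ring
    have hx02 : f ((f (alpha K 1 0 0)) • (alpha K 0 0 0) - (f (alpha K 0 0 0)) • (alpha K 1 0 0)) = 0 := by
      simp only [map_sub, map_smul, smul_eq_mul]; ring
    have E3a := H _ _ hx12 hx02
    rw [fmul_expand] at E3a
    simp only [p10 K, p12 K, mulW_left_one, map_zero, map_sub, map_neg, map_add, map_smul, smul_eq_mul] at E3a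
    have hx52 : f ((f (alpha K 1 0 0)) • (alpha K 0 1 1) - (f (alpha K 0 1 1)) • (alpha K 1 0 0)) = 0 := by
      simp only [map_sub, map_smul, smul_eq_mul]; ring
    have E3b := H _ _ hx12 hx52
    rw [fmul_expand] at E3b
    simp only [p15 K, p12 K, mulW_left_one, map_zero, map_sub, map_neg, map_add, map_smul, smul_eq_mul] at E3b
    have h2 : f (alpha K 1 0 0) = 0 := by
      have h : (f (alpha K 1 0 0)) ^ 3 = 0 := by
        linear_combination -E3a - E3b + (f (alpha K 1 0 0)) * (f (alpha K 0 0 0) + f (alpha K 0 1 1)) * h3 - (f (alpha K 1 0 0)) ^ 2 * h7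
      exact pow_eq_zero_iff (by norm_num) |>.mp h
    have hx16 : f ((f (alpha K 1 0 1)) • (alpha K 0 1 0) - (f (alpha K 0 1 0)) • (alpha K 1 0 1)) = 0 := by
      simp only [map_sub, map_smul, smul_eq_mul]; ring
    have hx46 : f ((f (alpha K 1 0 1)) • (alpha K 0 0 1) - (f (alpha K 0 0 1)) • (alpha K 1 0 1)) = 0 := by
      simp only [map_sub, map_smul, smul_eq_mul]; ring
    have E4A := H _ _ hx16 hx46
    rw [fmul_expand] at E4A
    simp only [p14 K, p16 K, mulW_left_one, map_zero, map_sub, map_neg, map_add, map_smul, smul_eq_mul] at E4A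
    have E4B := H _ _ hx46 hx16
    rw [fmul_expand] at E4B
    simp only [p41 K, p46 K, mulW_left_one, map_zero, map_sub, map_neg, map_add, map_smul, smul_eq_mul] at E4B
    have hx06 : f ((f (alpha K 1 0 1)) • (alpha K 0 0 0) - (f (alpha K 0 0 0)) • (alpha K 1 0 1)) = 0 := by
      simp only [map_sub, map_smul, smul_eq_mul]; ring
    have E4D := H _ _ hx06 hx46
    rw [fmul_expand] at E4D
    simp only [p04 K, p06 K, mulW_left_one, map_zero, map_sub, map_neg, map_add, map_smul, smul_eq_mul] at E4D
    have h6 : f (alpha K 1 0 1) = 0 := by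
      have h : (f (alpha K 1 0 1)) ^ 4 = 0 := by
        linear_combination -(f (alpha K 1 0 1)) * E4A - (f (alpha K 1 0 1)) * E4B - (f (alpha K 0 1 0)) * E4D - (f (alpha K 0 0 1)) * (f (alpha K 1 0 1)) ^ 2 * h2 + (f (alpha K 0 0 1)) * (f (alpha K 1 0 1)) ^ 2 * h7
      exact pow_eq_zero_iff (by norm_num) |>.mp h
    have hx40 : f ((f (alpha K 0 0 0)) • (alpha K 0 0 1) - (f (alpha K 0 0 1)) • (alpha K 0 0 0)) = 0 := by
      simp only [map_sub, map_smul, smul_eq_mul]; ring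
    have E5 := H _ _ hx40 h2
    rw [fmul_expand1] at E5
    simp only [p42 K, p02 K, map_zero, map_sub, map_neg, map_add, map_smul, smul_eq_mul] at E5
    have h0 : f (alpha K 0 0 0) = 0 := by
      have h : (f (alpha K 0 0 0)) ^ 2 = 0 := by linear_combination -E5 + (f (alpha K 0 0 0)) * h6
      exact pow_eq_zero_iff (by norm_num) |>.mp h
    have hx41 : f ((f (alpha K 0 1 0)) • (alpha K 0 0 1) - (f (alpha K 0 0 1)) • (alpha K 0 1 0)) = 0 := by
      simp only [map_sub, map_smul, smul_eq_mul]; ring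
    have E6 := H _ _ hx41 h3
    rw [fmul_expand1] at E6
    simp only [p43 K, p13 K, map_zero, map_sub, map_neg, map_add, map_smul, smul_eq_mul] at E6
    have h1 : f (alpha K 0 1 0) = 0 := by
      have h : (f (alpha K 0 1 0)) ^ 2 = 0 := by linear_combination -E6 + (f (alpha K 0 1 0)) * h7 - (f (alpha K 0 1 0)) * h2
      exact pow_eq_zero_iff (by norm_num) |>.mp h
    have hx45 : f ((f (alpha K 0 1 1)) • (alpha K 0 0 1) - (f (alpha K 0 0 1)) • (alpha K 0 1 1)) = 0 := by
      simp only [map_sub, map_smul, smul_eq_mul]; ring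
    have E7 := H _ _ hx45 h7
    rw [fmul_expand1] at E7
    simp only [p47 K, p57 K, map_zero, map_sub, map_neg, map_add, map_smul, smul_eq_mul] at E7
    have h5 : f (alpha K 0 1 1) = 0 := by
      have h : (f (alpha K 0 1 1)) ^ 2 = 0 := by linear_combination -E7 - (f (alpha K 0 1 1)) * h6 + (f (alpha K 0 0 1)) * h7
      exact pow_eq_zero_iff (by norm_num) |>.mp h
    have hSle : Submodule.span K {alpha K 0 0 0, alpha K 0 1 0, alpha K 1 0 0,
        alpha K 1 1 0, alpha K 0 1 1, alpha K 1 0 1, alpha K 1 1 1} ≤ LinearMap.ker f := by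
      rw [Submodule.span_le]
      intro x hx
      simp only [Set.mem_insert_iff, Set.mem_singleton_iff] at hx
      rcases hx with rfl | rfl | rfl | rfl | rfl | rfl | rfl <;>
        simp only [SetLike.mem_coe, LinearMap.mem_ker] <;> assumption
    have hSeq : Submodule.span K {alpha K 0 0 0, alpha K 0 1 0, alpha K 1 0 0,
        alpha K 1 1 0, alpha K 0 1 1, alpha K 1 0 1, alpha K 1 1 1} = LinearMap.ker f :=
      Submodule.eq_of_le_of_finrank_eq hSle (by rw [finrank_span7, hker7])
    rw [hBeq, ← hSeq]
  · rintro rfl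
    constructor
    · intro x hx y hy
      have m0 : alpha K 0 0 0 ∈ Submodule.span K {alpha K 0 0 0, alpha K 0 1 0, alpha K 1 0 0,
          alpha K 1 1 0, alpha K 0 1 1, alpha K 1 0 1, alpha K 1 1 1} := Submodule.subset_span (by simp)
      have m1 : alpha K 0 1 0 ∈ Submodule.span K {alpha K 0 0 0, alpha K 0 1 0, alpha K 1 0 0,
          alpha K 1 1 0, alpha K 0 1 1, alpha K 1 0 1, alpha K 1 1 1} := Submodule.subset_span (by simp)
      have m2 : alpha K 1 0 0 ∈ Submodule.span K {alpha K 0 0 0, alpha K 0 1 0, alpha K 1 0 0,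
          alpha K 1 1 0, alpha K 0 1 1, alpha K 1 0 1, alpha K 1 1 1} := Submodule.subset_span (by simp)
      have m3 : alpha K 1 1 0 ∈ Submodule.span K {alpha K 0 0 0, alpha K 0 1 0, alpha K 1 0 0,
          alpha K 1 1 0, alpha K 0 1 1, alpha K 1 0 1, alpha K 1 1 1} := Submodule.subset_span (by simp)
      have m5 : alpha K 0 1 1 ∈ Submodule.span K {alpha K 0 0 0, alpha K 0 1 0, alpha K 1 0 0,
          alpha K 1 1 0, alpha K 0 1 1, alpha K 1 0 1, alpha K 1 1 1} := Submodule.subset_span (by simp)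
      have m6 : alpha K 1 0 1 ∈ Submodule.span K {alpha K 0 0 0, alpha K 0 1 0, alpha K 1 0 0,
          alpha K 1 1 0, alpha K 0 1 1, alpha K 1 0 1, alpha K 1 1 1} := Submodule.subset_span (by simp)
      have m7 : alpha K 1 1 1 ∈ Submodule.span K {alpha K 0 0 0, alpha K 0 1 0, alpha K 1 0 0,
          alpha K 1 1 0, alpha K 0 1 1, alpha K 1 0 1, alpha K 1 1 1} := Submodule.subset_span (by simp)
      induction hx, hy using Submodule.span_induction₂ with
      | mem_mem u v hu hv =>
        simp only [Set.mem_insert_iff, Set.mem_singleton_iff] at hu hv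
        rcases hu with rfl | rfl | rfl | rfl | rfl | rfl | rfl <;>
          rcases hv with rfl | rfl | rfl | rfl | rfl | rfl | rfl <;>
          first
            | (rw [mulW_left_one]; exact Submodule.zero_mem _)
            | (simp only [p00 K, p01 K, p02 K, p03 K, p05 K, p06 K, p07 K,
                p10 K, p11 K, p12 K, p13 K, p15 K, p16 K, p17 K,
                p50 K, p51 K, p52 K, p53 K, p55 K, p56 K, p57 K]
               solve_by_elim [Submodule.zero_mem, Submodule.neg_mem, Submodule.sub_mem,
                 Submodule.smul_mem, m0, m1, m2, m3, m5, m6, m7])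
      | zero_left y hy => rw [mulW_zero_left]; exact Submodule.zero_mem _
      | zero_right x hx => rw [mulW_zero_right]; exact Submodule.zero_mem _
      | add_left x y z hx hy hz h1 h2 => rw [mulW_add_left]; exact Submodule.add_mem _ h1 h2
      | add_right x y z hx hy hz h1 h2 => rw [mulW_add_right]; exact Submodule.add_mem _ h1 h2
      | smul_left r x y hx hy h => rw [mulW_smul_left]; exact Submodule.smul_mem _ _ h
      | smul_right r x y hx hy h => rw [mulW_smul_right]; exact Submodule.smul_mem _ _ h
    · exact finrank_span7 K

end
end

section
/- The subspace spanned by e_1=α_{11}^1, e_2=α_{12}^1, e_3=α_{21}^1, e_4=α_{22}^1, e_6=α_{12}^2, e_7=α_{21}^2, e_8=α_{22}^2 is closed under the multiplication of W(2), i.e., it is a proper subalgebra of W(2) of codimension 1. -/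
set_option maxSynthPendingDepth 3
set_option synthInstance.maxHeartbeats 1000000
set_option maxHeartbeats 1000000

set_option linter.unusedSectionVars false

section
variable (K : Type*) [Field K] [CharZero K]

-- auxiliary
lemma alpha_apply (i j k : Fin 2) (x y : V2 K) : alpha K i j k x y = (x i * y j) • e K k := rfl

lemma e_apply (i j : Fin 2) : e K i j = if j = i then 1 else 0 := Pi.single_apply i 1 j

lemma decomp (z : V2 K) : z = z 0 • e K 0 + z 1 • e K 1 := by
  funext j
  fin_cases j <;> simp [e_apply]

lemma expand (C : W K) (z w : V2 K) (s : Fin 2) :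
    C z w s = z 0 * (w 0 * C (e K 0) (e K 0) s + w 1 * C (e K 0) (e K 1) s)
      + z 1 * (w 0 * C (e K 1) (e K 0) s + w 1 * C (e K 1) (e K 1) s) := by
  conv_lhs => rw [decomp K z, decomp K w]
  simp [mul_add]

noncomputable def phi : W K →ₗ[K] K where
  toFun A := A (e K 0) (e K 0) 1
  map_add' A B := by simp
  map_smul' c A := by simp

lemma phi_mul (A B : W K) :
    phi K (mulW K A B) =
      phi K A * (B (e K 0) (e K 0) 0 - B (e K 1) (e K 0) 1 - B (e K 0) (e K 1) 1)
      + (A (e K 0) (e K 1) 1 - 2 * A (e K 0) (e K 0) 0) * phi K B := by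
  show (mulW K A B) (e K 0) (e K 0) 1 = _
  rw [mulW_apply]
  simp only [Pi.sub_apply]
  rw [expand K A (e K 0) (B (e K 0) (e K 0)) 1,
      expand K B (A (e K 0) (e K 0)) (e K 0) 1,
      expand K B (e K 0) (A (e K 0) (e K 0)) 1]
  simp [e_apply, phi]
  ring

end

section
variable (K : Type*) [Field K] [CharZero K]

lemma mem_span_of_phi_eq_zero (A : W K) (h : phi K A = 0) :
    A ∈ Submodule.span K {alpha K 0 0 0, alpha K 0 1 0, alpha K 1 0 0,
          alpha K 1 1 0, alpha K 0 1 1, alpha K 1 0 1, alpha K 1 1 1} := by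
  have h' : A (e K 0) (e K 0) 1 = 0 := h
  have hA : A = A (e K 0) (e K 0) 0 • alpha K 0 0 0 + A (e K 0) (e K 1) 0 • alpha K 0 1 0
      + A (e K 1) (e K 0) 0 • alpha K 1 0 0 + A (e K 1) (e K 1) 0 • alpha K 1 1 0
      + A (e K 0) (e K 1) 1 • alpha K 0 1 1 + A (e K 1) (e K 0) 1 • alpha K 1 0 1
      + A (e K 1) (e K 1) 1 • alpha K 1 1 1 := by
    apply LinearMap.ext; intro x; apply LinearMap.ext; intro y; funext s
    rw [expand K A x y s]
    fin_cases s <;>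
      simp [alpha_apply, e_apply, h', LinearMap.add_apply, LinearMap.smul_apply] <;> ring
  rw [hA]
  have m : ∀ z ∈ ({alpha K 0 0 0, alpha K 0 1 0, alpha K 1 0 0,
      alpha K 1 1 0, alpha K 0 1 1, alpha K 1 0 1, alpha K 1 1 1} : Set (W K)),
      z ∈ Submodule.span K {alpha K 0 0 0, alpha K 0 1 0, alpha K 1 0 0,
          alpha K 1 1 0, alpha K 0 1 1, alpha K 1 0 1, alpha K 1 1 1} :=
    fun z hz => Submodule.subset_span hz
  refine Submodule.add_mem _ (Submodule.add_mem _ (Submodule.add_mem _ (Submodule.add_mem _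
    (Submodule.add_mem _ (Submodule.add_mem _ ?_ ?_) ?_) ?_) ?_) ?_) ?_ <;>
    exact Submodule.smul_mem _ _ (m _ (by simp))

lemma span_eq_ker : Submodule.span K {alpha K 0 0 0, alpha K 0 1 0, alpha K 1 0 0,
          alpha K 1 1 0, alpha K 0 1 1, alpha K 1 0 1, alpha K 1 1 1}
      = LinearMap.ker (phi K) := by
  apply le_antisymm
  · rw [Submodule.span_le]
    intro z hz
    simp only [Set.mem_insert_iff, Set.mem_singleton_iff] at hz
    rcases hz with h|h|h|h|h|h|h <;> subst h <;>
      simp [LinearMap.mem_ker, phi, alpha_apply, e_apply]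
  · intro A hA
    exact mem_span_of_phi_eq_zero K A (LinearMap.mem_ker.mp hA)

lemma phi_surj : Function.Surjective (phi K) := by
  intro c
  refine ⟨c • alpha K 0 0 1, ?_⟩
  simp [phi, alpha_apply, e_apply]

end
section

variable (K : Type*) [Field K] [CharZero K]

/-- The span of `e₁=α₁₁¹, e₂=α₁₂¹, e₃=α₂₁¹, e₄=α₂₂¹, e₆=α₁₂², e₇=α₂₁², e₈=α₂₂²`
is closed under the multiplication of `W(2)`: it is a proper subalgebra of
codimension 1. -/
theorem span_seven_is_subalgebra_W2 :
    (∀ x ∈ Submodule.span K {alpha K 0 0 0, alpha K 0 1 0, alpha K 1 0 0,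
          alpha K 1 1 0, alpha K 0 1 1, alpha K 1 0 1, alpha K 1 1 1},
      ∀ y ∈ Submodule.span K {alpha K 0 0 0, alpha K 0 1 0, alpha K 1 0 0,
          alpha K 1 1 0, alpha K 0 1 1, alpha K 1 0 1, alpha K 1 1 1},
      mulW K x y ∈ Submodule.span K {alpha K 0 0 0, alpha K 0 1 0, alpha K 1 0 0,
          alpha K 1 1 0, alpha K 0 1 1, alpha K 1 0 1, alpha K 1 1 1}) ∧
    Module.finrank K (Submodule.span K {alpha K 0 0 0, alpha K 0 1 0, alpha K 1 0 0,
          alpha K 1 1 0, alpha K 0 1 1, alpha K 1 0 1, alpha K 1 1 1} : Submodule K (W K)) = 7 := by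
  constructor
  · intro x hx y hy
    rw [span_eq_ker] at hx hy ⊢
    rw [LinearMap.mem_ker] at hx hy ⊢
    rw [phi_mul, hx, hy]
    ring
  · rw [span_eq_ker]
    have h := LinearMap.finrank_range_add_finrank_ker (phi K)
    rw [LinearMap.range_eq_top.mpr (phi_surj K), finrank_top, finrank_W,
      Module.finrank_self] at h
    omega


end
end

section
/- The algebra W_2 has exactly one subalgebra of codimension 1, namely the span of ξ_1, ξ_2, ξ_3, ξ_5, ξ_6 (i.e., the span of all basis elements except ξ_4). -/
section

variable (K : Type*) [Field K] [CharZero K]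

/-- The underlying space of the 6-dimensional algebra `W₂` of commutative bilinear
operations on a 2-dimensional space, with basis `ξ₁, …, ξ₆` (indexed `0,…,5`). -/
abbrev W2c := Fin 6 → K

/-- The basis vectors `ξ₁, …, ξ₆`. -/
noncomputable def xi (i : Fin 6) : W2c K := Pi.single i 1

/-- The multiplication table of `W₂`: row `i`, column `j` is `ξ_{i+1} ξ_{j+1}`. -/
noncomputable def Tw : Fin 6 → Fin 6 → W2c K :=
  ![![-xi K 0, 0, xi K 2, (-2:K) • xi K 3, -xi K 4, 0],
    ![-xi K 1, (-2:K) • xi K 2, 0, xi K 0 - xi K 4, xi K 1 - (2:K) • xi K 5, xi K 2],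
    ![0, 0, 0, 0, 0, 0],
    ![xi K 3, xi K 4 - (2:K) • xi K 0, -xi K 1 + xi K 5, 0, (-2:K) • xi K 3, -xi K 4],
    ![0, -xi K 1, (-2:K) • xi K 2, xi K 3, 0, -xi K 5],
    ![0, 0, 0, 0, 0, 0]]

/-- The multiplication of `W₂`, extended bilinearly from the table. -/
noncomputable def mulT (u v : W2c K) : W2c K :=
  ∑ i : Fin 6, ∑ j : Fin 6, (u i * v j) • Tw K i j

end

section AuxW2
variable {K : Type*} [Field K] [CharZero K]

lemma Tw00 : Tw K 0 0 = (-xi K 0 : W2c K) := rfl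
lemma Tw01 : Tw K 0 1 = (0 : W2c K) := rfl
lemma Tw02 : Tw K 0 2 = (xi K 2 : W2c K) := rfl
lemma Tw03 : Tw K 0 3 = ((-2:K) • xi K 3 : W2c K) := rfl
lemma Tw04 : Tw K 0 4 = (-xi K 4 : W2c K) := rfl
lemma Tw05 : Tw K 0 5 = (0 : W2c K) := rfl
lemma Tw10 : Tw K 1 0 = (-xi K 1 : W2c K) := rfl
lemma Tw11 : Tw K 1 1 = ((-2:K) • xi K 2 : W2c K) := rfl
lemma Tw12 : Tw K 1 2 = (0 : W2c K) := rfl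
lemma Tw13 : Tw K 1 3 = (xi K 0 - xi K 4 : W2c K) := rfl
lemma Tw14 : Tw K 1 4 = (xi K 1 - (2:K) • xi K 5 : W2c K) := rfl
lemma Tw15 : Tw K 1 5 = (xi K 2 : W2c K) := rfl
lemma Tw20 : Tw K 2 0 = (0 : W2c K) := rfl
lemma Tw21 : Tw K 2 1 = (0 : W2c K) := rfl
lemma Tw22 : Tw K 2 2 = (0 : W2c K) := rfl
lemma Tw23 : Tw K 2 3 = (0 : W2c K) := rfl
lemma Tw24 : Tw K 2 4 = (0 : W2c K) := rfl
lemma Tw25 : Tw K 2 5 = (0 : W2c K) := rfl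
lemma Tw30 : Tw K 3 0 = (xi K 3 : W2c K) := rfl
lemma Tw31 : Tw K 3 1 = (xi K 4 - (2:K) • xi K 0 : W2c K) := rfl
lemma Tw32 : Tw K 3 2 = (-xi K 1 + xi K 5 : W2c K) := rfl
lemma Tw33 : Tw K 3 3 = (0 : W2c K) := rfl
lemma Tw34 : Tw K 3 4 = ((-2:K) • xi K 3 : W2c K) := rfl
lemma Tw35 : Tw K 3 5 = (-xi K 4 : W2c K) := rfl
lemma Tw40 : Tw K 4 0 = (0 : W2c K) := rfl
lemma Tw41 : Tw K 4 1 = (-xi K 1 : W2c K) := rfl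
lemma Tw42 : Tw K 4 2 = ((-2:K) • xi K 2 : W2c K) := rfl
lemma Tw43 : Tw K 4 3 = (xi K 3 : W2c K) := rfl
lemma Tw44 : Tw K 4 4 = (0 : W2c K) := rfl
lemma Tw45 : Tw K 4 5 = (-xi K 5 : W2c K) := rfl
lemma Tw50 : Tw K 5 0 = (0 : W2c K) := rfl
lemma Tw51 : Tw K 5 1 = (0 : W2c K) := rfl
lemma Tw52 : Tw K 5 2 = (0 : W2c K) := rfl
lemma Tw53 : Tw K 5 3 = (0 : W2c K) := rfl
lemma Tw54 : Tw K 5 4 = (0 : W2c K) := rfl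
lemma Tw55 : Tw K 5 5 = (0 : W2c K) := rfl

lemma f_mulT (f : W2c K →ₗ[K] K) (u v : W2c K) :
    f (mulT K u v) =
      u 0 * v 0 * (-(f (xi K 0))) + u 0 * v 2 * f (xi K 2) + u 0 * v 3 * (-2 * f (xi K 3))
      + u 0 * v 4 * (-(f (xi K 4)))
      + u 1 * v 0 * (-(f (xi K 1))) + u 1 * v 1 * (-2 * f (xi K 2))
      + u 1 * v 3 * (f (xi K 0) - f (xi K 4)) + u 1 * v 4 * (f (xi K 1) - 2 * f (xi K 5))
      + u 1 * v 5 * f (xi K 2)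
      + u 3 * v 0 * f (xi K 3) + u 3 * v 1 * (-2 * f (xi K 0) + f (xi K 4))
      + u 3 * v 2 * (-(f (xi K 1)) + f (xi K 5)) + u 3 * v 4 * (-2 * f (xi K 3))
      + u 3 * v 5 * (-(f (xi K 4)))
      + u 4 * v 1 * (-(f (xi K 1))) + u 4 * v 2 * (-2 * f (xi K 2)) + u 4 * v 3 * f (xi K 3)
      + u 4 * v 5 * (-(f (xi K 5))) := by
  simp only [mulT, Fin.sum_univ_six, Tw00, Tw01, Tw02, Tw03, Tw04, Tw05, Tw10, Tw11, Tw12, Tw13, Tw14, Tw15, Tw20, Tw21, Tw22, Tw23, Tw24, Tw25, Tw30, Tw31, Tw32, Tw33, Tw34, Tw35, Tw40, Tw41, Tw42, Tw43, Tw44, Tw45, Tw50, Tw51, Tw52, Tw53, Tw54, Tw55, map_add, map_sub, map_neg, map_smul,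
    map_zero, smul_eq_mul, smul_zero, mul_zero, add_zero, zero_add]
  ring

lemma xi_apply (i j : Fin 6) : xi K i j = if j = i then 1 else 0 := by
  simp [xi, Pi.single_apply]

lemma f_eq_sum (f : W2c K →ₗ[K] K) (x : W2c K) :
    f x = ∑ i, x i * f (xi K i) := by
  have h : ∀ i : Fin 6, (fun j => if i = j then (1:K) else 0) = xi K i := by
    intro i; funext j
    rcases eq_or_ne i j with rfl | h
    · simp [xi, Pi.single_apply]
    · simp [xi, Pi.single_apply, h, Ne.symm h]
  rw [LinearMap.pi_apply_eq_sum_univ]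
  simp only [h, smul_eq_mul]

lemma mem_span_of_apply3 (x : W2c K) (hx : x 3 = 0) :
    x ∈ Submodule.span K {xi K 0, xi K 1, xi K 2, xi K 4, xi K 5} := by
  have hx' : x = x 0 • xi K 0 + x 1 • xi K 1 + x 2 • xi K 2 + x 4 • xi K 4 + x 5 • xi K 5 := by
    funext j; fin_cases j <;>
      simp [xi, Pi.single_apply, hx]
  rw [hx']
  refine Submodule.add_mem _ (Submodule.add_mem _ (Submodule.add_mem _
    (Submodule.add_mem _ ?_ ?_) ?_) ?_) ?_ <;>
    exact Submodule.smul_mem _ _ (Submodule.subset_span (by simp))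

lemma span_eq_ker_s14 :
    Submodule.span K {xi K 0, xi K 1, xi K 2, xi K 4, xi K 5}
      = LinearMap.ker (LinearMap.proj 3 : (W2c K) →ₗ[K] K) := by
  apply le_antisymm
  · rw [Submodule.span_le]
    rintro x hx
    simp only [Set.mem_insert_iff, Set.mem_singleton_iff] at hx
    rcases hx with h|h|h|h|h <;> subst h <;>
      simp [SetLike.mem_coe, LinearMap.mem_ker, xi_apply]
  · intro x hx
    exact mem_span_of_apply3 x (by simpa using LinearMap.mem_ker.mp hx)

lemma finrank_ker_eq_five (f : W2c K →ₗ[K] K) (hf : f ≠ 0) :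
    Module.finrank K (LinearMap.ker f) = 5 := by
  have h := Module.Dual.finrank_ker_add_one_of_ne_zero (f := f) hf
  have h6 : Module.finrank K (W2c K) = 6 := Module.finrank_fin_fun (R := K)
  rw [h6] at h
  omega

end AuxW2


section

variable (K : Type*) [Field K] [CharZero K]

/-- `W₂` has exactly one subalgebra of codimension 1, namely the span of
`ξ₁, ξ₂, ξ₃, ξ₅, ξ₆` (all basis elements except `ξ₄`). -/


theorem subalgebras_codim_one_W2c :
    {B : Submodule K (W2c K) |
        (∀ x ∈ B, ∀ y ∈ B, mulT K x y ∈ B) ∧ Module.finrank K B = 5}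
      = {Submodule.span K {xi K 0, xi K 1, xi K 2, xi K 4, xi K 5}} := by
  ext B
  simp only [Set.mem_setOf_eq, Set.mem_singleton_iff]
  constructor
  · rintro ⟨hmul, hrank⟩
    have hlt : B < ⊤ := by
      refine lt_of_le_of_ne le_top fun h => ?_
      rw [h, finrank_top] at hrank
      have h6 : Module.finrank K (W2c K) = 6 := Module.finrank_fin_fun (R := K)
      rw [h6] at hrank
      norm_num at hrank
    obtain ⟨f, hf0, hfB⟩ := B.exists_dual_map_eq_bot_of_lt_top hlt inferInstance
    have hle : B ≤ LinearMap.ker f := fun x hx => by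
      have hm : f x ∈ B.map f := Submodule.mem_map_of_mem hx
      rw [hfB, Submodule.mem_bot] at hm
      exact LinearMap.mem_ker.mpr hm
    have hBf : B = LinearMap.ker f :=
      Submodule.eq_of_le_of_finrank_le hle
        (by rw [finrank_ker_eq_five f hf0, hrank])
    have hmem : ∀ x : W2c K, x ∈ B ↔ f x = 0 := fun x => by rw [hBf, LinearMap.mem_ker]
    have huu : ∀ i j : Fin 6, (f (xi K j) • xi K i - f (xi K i) • xi K j) ∈ B := fun i j => by
      rw [hmem, map_sub, map_smul, map_smul, smul_eq_mul, smul_eq_mul, mul_comm, sub_self]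
    have hE : ∀ i j k l : Fin 6,
        f (mulT K (f (xi K j) • xi K i - f (xi K i) • xi K j)
                  (f (xi K l) • xi K k - f (xi K k) • xi K l)) = 0 :=
      fun i j k l => (hmem _).mp (hmul _ (huu i j) _ (huu k l))
    have ha2 : f (xi K 2) = 0 := by
      have h := hE 1 2 1 2
      rw [f_mulT] at h
      simp only [Pi.sub_apply, Pi.smul_apply, xi_apply, Fin.reduceEq, reduceIte,
        smul_eq_mul, mul_one, mul_zero, zero_mul, sub_zero, zero_sub, add_zero, zero_add,
        neg_zero, mul_neg, neg_neg] at h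
      have h3 : f (xi K 2) ^ 3 = 0 := by linear_combination (-1/2 : K) * h
      exact pow_eq_zero_iff three_ne_zero |>.mp h3
    have ha5 : f (xi K 5) = 0 := by
      have h1 := hE 1 5 4 5
      have h2 := hE 3 5 2 5
      rw [f_mulT] at h1 h2
      simp only [Pi.sub_apply, Pi.smul_apply, xi_apply, Fin.reduceEq, reduceIte,
        smul_eq_mul, mul_one, mul_zero, zero_mul, sub_zero, zero_sub, add_zero, zero_add,
        neg_zero, mul_neg, neg_neg] at h1 h2
      have h3 : f (xi K 5) ^ 3 = 0 := by linear_combination -h1 - h2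
      exact pow_eq_zero_iff three_ne_zero |>.mp h3
    have ha1 : f (xi K 1) = 0 := by
      have h := hE 1 3 1 2
      rw [f_mulT] at h
      simp only [Pi.sub_apply, Pi.smul_apply, xi_apply, Fin.reduceEq, reduceIte,
        smul_eq_mul, mul_one, mul_zero, zero_mul, sub_zero, zero_sub, add_zero, zero_add,
        neg_zero, mul_neg, neg_neg] at h
      have h3 : f (xi K 1) ^ 3 = 0 := by
        linear_combination (-1 : K) * h
          + (-2 * f (xi K 2) * f (xi K 3) - f (xi K 1) * f (xi K 4)
              + 2 * f (xi K 0) * f (xi K 1)) * ha2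
          + f (xi K 1) ^ 2 * ha5
      exact pow_eq_zero_iff three_ne_zero |>.mp h3
    have ha0 : f (xi K 0) = 0 := by
      have h1 := hE 0 1 0 3
      have h2 := hE 0 3 0 1
      rw [f_mulT] at h1 h2
      simp only [Pi.sub_apply, Pi.smul_apply, xi_apply, Fin.reduceEq, reduceIte,
        smul_eq_mul, mul_one, mul_zero, zero_mul, sub_zero, zero_sub, add_zero, zero_add,
        neg_zero, mul_neg, neg_neg] at h1 h2
      have h3 : f (xi K 0) ^ 3 = 0 := by linear_combination -h1 - h2
      exact pow_eq_zero_iff three_ne_zero |>.mp h3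
    have ha4 : f (xi K 4) = 0 := by
      have h := hE 3 4 1 4
      rw [f_mulT] at h
      simp only [Pi.sub_apply, Pi.smul_apply, xi_apply, Fin.reduceEq, reduceIte,
        smul_eq_mul, mul_one, mul_zero, zero_mul, sub_zero, zero_sub, add_zero, zero_add,
        neg_zero, mul_neg, neg_neg] at h
      have h3 : f (xi K 4) ^ 3 = 0 := by
        linear_combination h - 3 * f (xi K 3) * f (xi K 4) * ha1
          + 2 * f (xi K 4) ^ 2 * ha0
      exact pow_eq_zero_iff three_ne_zero |>.mp h3
    have ha3 : f (xi K 3) ≠ 0 := by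
      intro h3
      apply hf0
      refine LinearMap.ext fun x => ?_
      rw [f_eq_sum f x, Fin.sum_univ_six, ha0, ha1, ha2, h3, ha4, ha5]
      simp
    rw [hBf, span_eq_ker_s14]
    ext x
    rw [LinearMap.mem_ker, LinearMap.mem_ker, LinearMap.proj_apply,
      f_eq_sum f x, Fin.sum_univ_six, ha0, ha1, ha2, ha4, ha5]
    simp [mul_eq_zero, ha3]
  · rintro rfl
    rw [span_eq_ker_s14]
    constructor
    · intro x hx y hy
      rw [LinearMap.mem_ker, LinearMap.proj_apply] at hx hy
      rw [LinearMap.mem_ker, f_mulT]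
      simp [xi_apply, hx, hy]
    · refine finrank_ker_eq_five _ fun h => ?_
      have h1 : (LinearMap.proj 3 : (W2c K) →ₗ[K] K) (xi K 3) = 0 := by rw [h]; rfl
      rw [LinearMap.proj_apply, xi_apply] at h1
      simp at h1

end
end
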